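/- For any odd integer k ≥ 1, the generating function f(t) = Σ_n dim(O^k_n) t^n of the k-odd subalgebra of QSym (level 1), whose n-th graded dimension equals the number of compositions of n with no part in {2,4,...,k-1}, satisfies f(t) = (1 - t²)/(1 - t - t² - t^{k+1}). -/

import Mathlib

namespace KOddAux

def w (k i : ℕ) : ℕ := if (i ≤ k → Odd i) then 1 else 0

def L (k : ℕ) : ℕ → Finset (List ℕ)
  | 0 => {[]}
  | (n+1) => (Finset.range (n+1)).biUnion fun i =>
      if (i+1 ≤ k → Odd (i+1)) then (L k (n-i)).image (List.cons (i+1)) else ∅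
  decreasing_by exact Nat.lt_succ_of_le (Nat.sub_le _ _)

theorem mem_L (k : ℕ) : ∀ n I, I ∈ L k n ↔
    (∀ i ∈ I, 0 < i ∧ (i ≤ k → Odd i)) ∧ I.sum = n := by
  intro n
  induction n using Nat.strong_induction_on with
  | _ n ih =>
    match n with
    | 0 =>
      intro I
      simp only [L, Finset.mem_singleton]
      constructor
      · rintro rfl; simp
      · rintro ⟨h1, h2⟩
        cases I with
        | nil => rfl
        | cons a t =>
          exfalso
          have := (h1 a (by simp)).1
          simp [List.sum_cons] at h2
          omega
    | (n+1) =>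
      intro I
      rw [L]
      simp only [Finset.mem_biUnion, Finset.mem_range]
      constructor
      · rintro ⟨i, hi, hI⟩
        split at hI
        · rename_i hall
          simp only [Finset.mem_image] at hI
          obtain ⟨J, hJ, rfl⟩ := hI
          rw [ih (n-i) (by omega)] at hJ
          refine ⟨?_, ?_⟩
          · intro x hx
            rcases List.mem_cons.mp hx with rfl | hx
            · exact ⟨by omega, hall⟩
            · exact hJ.1 x hx
          · have := hJ.2
            simp only [List.sum_cons]
            omega
        · simp at hI
      · rintro ⟨h1, h2⟩
        cases I with
        | nil => simp at h2
        | cons a t =>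
          have ha := h1 a (by simp)
          have hsum : t.sum = n + 1 - a := by
            simp only [List.sum_cons] at h2; omega
          have ha1 : 1 ≤ a := ha.1
          have hale : a ≤ n+1 := by
            simp only [List.sum_cons] at h2; omega
          refine ⟨a - 1, by omega, ?_⟩
          have heq : a - 1 + 1 = a := by omega
          rw [if_pos (by rw [heq]; exact ha.2)]
          simp only [Finset.mem_image]
          refine ⟨t, ?_, by rw [heq]⟩
          rw [ih (n - (a-1)) (by omega)]
          exact ⟨fun x hx => h1 x (by simp [hx]), by omega⟩

def A (k n : ℕ) : ℕ := (L k n).card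

theorem A_zero (k : ℕ) : A k 0 = 1 := by simp [A, L]

theorem A_succ (k n : ℕ) :
    A k (n+1) = ∑ i ∈ Finset.range (n+1), w k (i+1) * A k (n-i) := by
  show (L k (n+1)).card = _
  rw [L, Finset.card_biUnion]
  · refine Finset.sum_congr rfl fun i _ => ?_
    unfold w
    split
    · rw [Finset.card_image_of_injective _ (List.cons_injective), one_mul]; rfl
    · simp
  · intro x hx y hy hxy
    rw [Function.onFun, Finset.disjoint_left]
    intro I hI hI'
    split at hI
    · split at hI'
      · simp only [Finset.mem_image] at hI hI'
        obtain ⟨J, _, rfl⟩ := hI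
        obtain ⟨J', _, hJ'⟩ := hI'
        apply hxy
        have := (List.cons.injEq _ _ _ _).mp hJ'
        omega
      · simp at hI'
    · simp at hI

theorem w_one (k : ℕ) : w k 1 = 1 := by simp [w]
theorem w_zero (k : ℕ) : w k 0 = 0 := by simp [w, Nat.odd_iff]

theorem w_step (k : ℕ) (hk : Odd k) (j : ℕ) :
    w k (j+2) = w k j + (if j = k-1 then 1 else 0) := by
  have hk' : k % 2 = 1 := Nat.odd_iff.mp hk
  simp only [w, Nat.odd_iff]
  by_cases h1 : j + 2 ≤ k
  · have h2 : j ≤ k := by omega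
    have h3 : j ≠ k - 1 := by omega
    rw [if_neg h3, add_zero]
    by_cases ho : j % 2 = 1
    · rw [if_pos (fun _ => by omega), if_pos (fun _ => ho)]
    · rw [if_neg (fun h => ho (by have := h h1; omega)),
        if_neg (fun h => ho (h h2))]
  · rw [if_pos (fun h => absurd h h1)]
    by_cases h2 : j ≤ k
    · by_cases h4 : j = k
      · have h5 : j ≠ k - 1 := by omega
        rw [if_pos (fun _ => by omega), if_neg h5]
      · have hj : j = k - 1 := by omega
        have hneg : ¬(j ≤ k → j % 2 = 1) := by
          intro h; have := h h2; omega
        rw [if_neg hneg, if_pos hj]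
    · have hv : (j ≤ k → j % 2 = 1) := fun h => absurd h h2
      have h3 : j ≠ k - 1 := by omega
      rw [if_pos hv, if_neg h3]

theorem w_two (k : ℕ) (hk : Odd k) : w k 2 = if k = 1 then 1 else 0 := by
  have hk' : k % 2 = 1 := Nat.odd_iff.mp hk
  simp only [w, Nat.odd_iff]
  by_cases h : k = 1
  · rw [if_pos h, if_pos (by omega)]
  · rw [if_neg h, if_neg (by intro h'; have := h' (by omega); omega)]

theorem A_one (k : ℕ) : A k 1 = 1 := by
  rw [A_succ, Finset.sum_range_one]
  norm_num [w_one, A_zero]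

theorem A_two (k : ℕ) : A k 2 = 1 + w k 2 := by
  rw [A_succ, Finset.sum_range_succ, Finset.sum_range_one]
  norm_num [w_one, A_zero, A_one]

theorem A_rec (k : ℕ) (hk : Odd k) (m : ℕ) :
    A k (m+3) = A k (m+2) + A k (m+1) +
      (if k - 1 ≤ m + 1 then A k (m + 1 - (k-1)) else 0) := by
  rw [A_succ k (m+2), Finset.sum_range_succ']
  have h0 : w k (0+1) * A k (m+2-0) = A k (m+2) := by
    norm_num [w_one]
  rw [h0]
  have hstep : ∀ i, w k (i+1+1) * A k (m+2-(i+1)) =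
      w k i * A k (m+1-i) + (if i = k-1 then A k (m+1-i) else 0) := by
    intro i
    have h : m + 2 - (i+1) = m + 1 - i := by omega
    rw [h, w_step k hk i, add_mul, ite_mul, one_mul, zero_mul]
  rw [Finset.sum_congr rfl fun i _ => hstep i, Finset.sum_add_distrib]
  have hfirst : ∑ i ∈ Finset.range (m+2), w k i * A k (m+1-i) = A k (m+1) := by
    rw [Finset.sum_range_succ', w_zero, zero_mul, add_zero, A_succ k m]
    refine Finset.sum_congr rfl fun i _ => ?_
    have h : m + 1 - (i+1) = m - i := by omega
    rw [h]
  have hsecond : ∑ i ∈ Finset.range (m+2), (if i = k-1 then A k (m+1-i) else 0)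
      = if k - 1 ≤ m + 1 then A k (m + 1 - (k-1)) else 0 := by
    rw [Finset.sum_ite_eq']
    have h : k - 1 ∈ Finset.range (m+2) ↔ k - 1 ≤ m + 1 := by
      rw [Finset.mem_range]; omega
    simp only [h]
  rw [hfirst, hsecond]
  ring

theorem card_eq (k n : ℕ) :
    Nat.card {I : List ℕ //
      (∀ i ∈ I, 0 < i ∧ (i ≤ k → Odd i)) ∧ I.sum = n} = A k n := by
  rw [Nat.card_congr (Equiv.subtypeEquivRight fun I => (mem_L k n I).symm)]
  exact Nat.card_eq_finsetCard _

theorem coeff_mul_X' (f : PowerSeries ℚ) (n : ℕ) :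
    (PowerSeries.coeff n) (f * PowerSeries.X) =
      if 1 ≤ n then PowerSeries.coeff (n-1) f else 0 := by
  rw [← pow_one (PowerSeries.X : PowerSeries ℚ), PowerSeries.coeff_mul_X_pow']

end KOddAux

/-- For any odd integer `k ≥ 1`, the generating function
`f(t) = Σ_n dim(O^k_n) t^n` of the `k`-odd subalgebra of `QSym` (level 1),
whose `n`-th graded dimension equals the number of compositions of `n` with
no part in `{2, 4, …, k-1}` (equivalently, every part `i ≤ k` is odd),
satisfies `f(t) = (1 - t²)/(1 - t - t² - t^{k+1})`. -/
theorem kodd_hilbert_series (k : ℕ) (hk : Odd k) :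
    (PowerSeries.mk fun n =>
        (Nat.card {I : List ℕ //
            (∀ i ∈ I, 0 < i ∧ (i ≤ k → Odd i)) ∧ I.sum = n} : ℚ)) *
      (1 - PowerSeries.X - PowerSeries.X ^ 2 - PowerSeries.X ^ (k + 1)) =
    1 - PowerSeries.X ^ 2 := by
  have hk1 : 1 ≤ k := hk.pos
  ext n
  simp only [mul_sub, mul_one, map_sub, KOddAux.coeff_mul_X',
    PowerSeries.coeff_mul_X_pow', PowerSeries.coeff_one, PowerSeries.coeff_X_pow,
    PowerSeries.coeff_mk, KOddAux.card_eq]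
  match n with
  | 0 =>
    norm_num [KOddAux.A_zero]
  | 1 =>
    norm_num [KOddAux.A_zero, KOddAux.A_one, show ¬(k+1 ≤ 1) from by omega]
  | 2 =>
    by_cases h : k = 1
    · subst h
      norm_num [KOddAux.A_two, KOddAux.w_two 1 (by norm_num), KOddAux.A_one,
        KOddAux.A_zero]
    · norm_num [KOddAux.A_two, KOddAux.w_two k hk, h, KOddAux.A_one,
        KOddAux.A_zero, show ¬(k+1 ≤ 2) from by omega]
  | (m+3) =>
    simp only [show (1 ≤ m+3) from by omega, show (2 ≤ m+3) from by omega,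
      show ¬(m+3 = 0) from by omega, show ¬(m+3 = 2) from by omega,
      if_true, if_false, ite_true, ite_false, eq_self_iff_true, not_false_iff]
    have e1 : m+3-1 = m+2 := by omega
    have e2 : m+3-2 = m+1 := by omega
    have e3 : m+3-(k+1) = m+1-(k-1) := by omega
    have e4 : (k+1 ≤ m+3) ↔ (k-1 ≤ m+1) := by omega
    rw [e1, e2, e3]
    simp only [e4]
    rw [KOddAux.A_rec k hk m]
    split_ifs with h
    · push_cast; ring
    · push_cast; ring
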